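/- arXiv:2005.06014 — 4 statements merged into one kernel-verified Lean document; each statement's English description precedes it below -/
import Mathlib

section
/- Let s ≥ 0, K > 0, let m ≥ 0 be an integer, and let δ ∈ (0, ν(s)) where ν(s) ∈ (0,1) is sufficiently small (depending only on s). Let (λ_j)_{j≥0} be a sequence of nonnegative reals such that λ_j ≤ K for all j ≥ 0 and λ_{j+1} ≤ (1 − δ) λ_j for all j ≥ m. Then Σ_{j=0}^∞ λ_j (1 + j²)^s ≤ C(s) · K · ( (m+1)^{2s+1} + δ^{−(2s+1)} + δ^{−1} (m+1)^{2s} ) for some constant C(s) > 0 depending only on s. -/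
open Real

lemma rpow_le_const_mul_exp {p c x : ℝ} (hp : 0 ≤ p) (hc : 0 < c) (hx : 0 ≤ x) :
    x ^ p ≤ ((p + 1) / c) ^ p * Real.exp (c * x) := by
  rcases eq_or_lt_of_le hp with hp0 | hp0
  · rw [← hp0]
    simpa using Real.one_le_exp (by positivity)
  rcases eq_or_lt_of_le hx with hx0 | hx0
  · rw [← hx0, Real.zero_rpow (ne_of_gt hp0)]
    positivity
  have hq : 0 < (p + 1) / c := by positivity
  rw [Real.rpow_def_of_pos hx0, Real.rpow_def_of_pos hq, ← Real.exp_add]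
  apply Real.exp_le_exp.2
  have hlog : Real.log x = Real.log ((p+1)/c) + Real.log (x * c / (p+1)) := by
    rw [← Real.log_mul (ne_of_gt hq) (by positivity)]
    congr 1; field_simp
  have h1 : Real.log (x * c / (p+1)) ≤ x * c / (p+1) - 1 :=
    Real.log_le_sub_one_of_pos (by positivity)
  have h2 : p * (x * c / (p+1)) ≤ x * c := by
    rw [mul_div_assoc', div_le_iff₀ (by positivity)]
    nlinarith
  nlinarith [hp0.le]

lemma add_rpow_le_two_rpow {a b p : ℝ} (ha : 0 ≤ a) (hb : 0 ≤ b) (hp : 0 ≤ p) :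
    (a + b) ^ p ≤ 2 ^ p * (a ^ p + b ^ p) := by
  have h1 : a + b ≤ 2 * max a b := by
    rcases le_total a b with h | h
    · simp [max_eq_right h]; linarith
    · simp [max_eq_left h]; linarith
  have h2 : (a + b) ^ p ≤ (2 * max a b) ^ p :=
    Real.rpow_le_rpow (by positivity) h1 hp
  have h3 : (2 * max a b) ^ p = 2 ^ p * (max a b) ^ p :=
    Real.mul_rpow (by norm_num) (le_max_iff.2 (Or.inl ha))
  have h4 : (max a b) ^ p ≤ a ^ p + b ^ p := by
    rcases le_total a b with h | h
    · rw [max_eq_right h]; nlinarith [Real.rpow_nonneg ha p]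
    · rw [max_eq_left h]; nlinarith [Real.rpow_nonneg hb p]
  calc (a+b)^p ≤ 2^p * (max a b)^p := h3 ▸ h2
    _ ≤ 2^p * (a^p + b^p) := mul_le_mul_of_nonneg_left h4 (by positivity)

set_option maxHeartbeats 1000000 in
/-- Abstract sequence lemma combining the low-frequency and high-frequency estimates:
a bounded nonnegative sequence decaying geometrically with rate `1-δ` from index `m`
satisfies `Σ_j λ_j (1+j²)^s ≤ C(s) K ((m+1)^{2s+1} + δ^{-(2s+1)} + δ^{-1}(m+1)^{2s})`. -/
theorem eigenvalue_sum_bound (s : ℝ) (hs : 0 ≤ s) :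
    ∃ ν ∈ Set.Ioo (0:ℝ) 1, ∃ C > 0, ∀ K > 0, ∀ m : ℕ, ∀ δ ∈ Set.Ioo (0:ℝ) ν,
      ∀ lam : ℕ → ℝ, (∀ j, 0 ≤ lam j) → (∀ j, lam j ≤ K) →
        (∀ j, m ≤ j → lam (j + 1) ≤ (1 - δ) * lam j) →
        (∑' j : ℕ, lam j * (1 + (j : ℝ) ^ 2) ^ s)
          ≤ C * K * (((m : ℝ) + 1) ^ (2 * s + 1) + δ ^ (-(2 * s + 1))
              + δ⁻¹ * ((m : ℝ) + 1) ^ (2 * s)) := by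
  have hp : (0:ℝ) ≤ 2 * s := by positivity
  set p : ℝ := 2 * s with hp_def
  refine ⟨1/2, ⟨by norm_num, by norm_num⟩,
    1 + 2 ^ p + 4 * (2 * (p + 1)) ^ p * 2 ^ p, by positivity, ?_⟩
  intro K hK m δ hδ lam hlam0 hlamK hdec
  obtain ⟨hδ0, hδhalf⟩ := hδ
  have hδ1 : δ < 1 := by linarith
  set ρ : ℝ := 1 - δ with hρ_def
  have hρ0 : 0 ≤ ρ := by simp [hρ_def]; linarith
  have hρ1 : ρ < 1 := by simp [hρ_def]; linarith
  set q : ℝ := Real.exp (-(δ/2)) with hq_def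
  have hq0 : 0 < q := Real.exp_pos _
  have hq1 : q < 1 := by
    rw [hq_def, Real.exp_lt_one_iff]; linarith
  -- weights
  set w : ℕ → ℝ := fun j => (1 + (j:ℝ)^2) ^ s with hw_def
  have hw0 : ∀ j, 0 ≤ w j := fun j => Real.rpow_nonneg (by positivity) s
  set f : ℕ → ℝ := fun j => lam j * w j with hf_def
  have hf0 : ∀ j, 0 ≤ f j := fun j => mul_nonneg (hlam0 j) (hw0 j)
  -- weight bound
  have hw_le : ∀ j : ℕ, w j ≤ ((j:ℝ) + 1) ^ p := by
    intro j
    have h1 : w j ≤ (((j:ℝ)+1)^(2:ℕ)) ^ s := by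
      apply Real.rpow_le_rpow (by positivity) (by nlinarith [Nat.cast_nonneg (α := ℝ) j]) hs
    calc w j ≤ (((j:ℝ)+1)^(2:ℕ)) ^ s := h1
      _ = (((j:ℝ)+1)^((2:ℕ):ℝ)) ^ s := by rw [Real.rpow_natCast]
      _ = ((j:ℝ)+1) ^ p := by
          rw [← Real.rpow_mul (by positivity)]; norm_num [hp_def]
  have hw_le_m : ∀ j : ℕ, j ≤ m → w j ≤ ((m:ℝ) + 1) ^ p := by
    intro j hj
    have hjm : (j:ℝ) ≤ m := by exact_mod_cast hj
    have h1 : w j ≤ (((m:ℝ)+1)^(2:ℕ)) ^ s :=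
      Real.rpow_le_rpow (by positivity) (by nlinarith) hs
    calc w j ≤ (((m:ℝ)+1)^(2:ℕ)) ^ s := h1
      _ = (((m:ℝ)+1)^((2:ℕ):ℝ)) ^ s := by rw [Real.rpow_natCast]
      _ = ((m:ℝ)+1) ^ p := by
          rw [← Real.rpow_mul (by positivity)]; norm_num [hp_def]
  -- geometric decay
  have hgeo : ∀ k : ℕ, lam (m + k) ≤ ρ ^ k * K := by
    intro k
    induction k with
    | zero => simpa using hlamK m
    | succ k ih =>
      have hst : lam (m + k + 1) ≤ ρ * lam (m + k) := hdec (m + k) (Nat.le_add_right m k)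
      have : lam (m + (k+1)) = lam (m + k + 1) := by ring_nf
      rw [this]
      calc lam (m + k + 1) ≤ ρ * lam (m + k) := hst
        _ ≤ ρ * (ρ ^ k * K) := mul_le_mul_of_nonneg_left ih hρ0
        _ = ρ ^ (k+1) * K := by ring
  -- constants for the tail majorant
  set A : ℝ := ((p + 1) / (δ/2)) ^ p with hA_def
  have hA0 : 0 ≤ A := Real.rpow_nonneg (by positivity) p
  set c1 : ℝ := K * 2 ^ p * ((m:ℝ) + 1) ^ p with hc1_def
  set c2 : ℝ := K * 2 ^ p * A with hc2_def
  have hc10 : 0 ≤ c1 := by positivity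
  have hc20 : 0 ≤ c2 := by positivity
  set G : ℕ → ℝ := fun k => c1 * ρ ^ (k+1) + c2 * q ^ (k+1) with hG_def
  -- ρ ≤ exp(-δ)
  have hρ_exp : ρ ≤ Real.exp (-δ) := by
    have := Real.add_one_le_exp (-δ)
    simpa [hρ_def] using by linarith [Real.add_one_le_exp (-δ)]
  -- pointwise tail bound
  have htail : ∀ k : ℕ, f (k + (m+1)) ≤ G k := by
    intro k
    have hidx : k + (m+1) = m + (k+1) := by omega
    have hlam_le : lam (k + (m+1)) ≤ ρ ^ (k+1) * K := by rw [hidx]; exact hgeo (k+1)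
    have hwk : w (k + (m+1)) ≤ 2 ^ p * (((m:ℝ)+1) ^ p + ((k:ℝ)+1) ^ p) := by
      calc w (k + (m+1)) ≤ ((k + (m+1) : ℕ) + 1 : ℝ) ^ p := hw_le _
        _ = (((m:ℝ)+1) + ((k:ℝ)+1)) ^ p := by push_cast; ring_nf
        _ ≤ 2 ^ p * (((m:ℝ)+1) ^ p + ((k:ℝ)+1) ^ p) :=
            add_rpow_le_two_rpow (by positivity) (by positivity) hp
    have hstep1 : f (k + (m+1)) ≤ (ρ ^ (k+1) * K) * (2 ^ p * (((m:ℝ)+1) ^ p + ((k:ℝ)+1) ^ p)) := by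
      apply mul_le_mul hlam_le hwk (hw0 _)
      positivity
    have hρpow : ρ ^ (k+1) ≤ Real.exp (-(δ * (k+1))) := by
      calc ρ ^ (k+1) ≤ (Real.exp (-δ)) ^ (k+1) := pow_le_pow_left₀ hρ0 hρ_exp _
        _ = Real.exp (-(δ * (k+1))) := by
            rw [← Real.exp_nat_mul]; congr 1; push_cast; ring
    have hkp : ((k:ℝ)+1) ^ p ≤ A * Real.exp ((δ/2) * ((k:ℝ)+1)) :=
      rpow_le_const_mul_exp hp (by positivity) (by positivity)
    have hcross : ρ ^ (k+1) * ((k:ℝ)+1) ^ p ≤ A * q ^ (k+1) := by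
      have h1 : ρ ^ (k+1) * ((k:ℝ)+1) ^ p
          ≤ Real.exp (-(δ * (k+1))) * (A * Real.exp ((δ/2) * ((k:ℝ)+1))) := by
        apply mul_le_mul hρpow hkp (Real.rpow_nonneg (by positivity) p) (Real.exp_pos _).le
      have hqpow : q ^ (k+1) = Real.exp (-(δ/2) * ((k:ℝ)+1)) := by
        rw [hq_def, ← Real.exp_nat_mul]; congr 1; push_cast; ring
      have h2 : Real.exp (-(δ * (k+1))) * (A * Real.exp ((δ/2) * ((k:ℝ)+1)))
          = A * q ^ (k+1) := by
        rw [hqpow]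
        rw [show -(δ/2) * ((k:ℝ)+1) = -(δ * ((k:ℝ)+1)) + (δ/2) * ((k:ℝ)+1) by ring,
          Real.exp_add]
        push_cast
        ring
      linarith [h1, h2.le, h2.ge]
    calc f (k + (m+1)) ≤ (ρ ^ (k+1) * K) * (2 ^ p * (((m:ℝ)+1) ^ p + ((k:ℝ)+1) ^ p)) := hstep1
      _ = c1 * ρ ^ (k+1) + (K * 2 ^ p) * (ρ ^ (k+1) * ((k:ℝ)+1) ^ p) := by
          rw [hc1_def]; ring
      _ ≤ c1 * ρ ^ (k+1) + (K * 2 ^ p) * (A * q ^ (k+1)) := by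
          have : (0:ℝ) ≤ K * 2 ^ p := by positivity
          nlinarith [mul_le_mul_of_nonneg_left hcross this]
      _ = G k := by rw [hG_def, hc2_def]; ring
  -- summability
  have hsum_ρ : Summable (fun k : ℕ => c1 * ρ ^ (k+1)) := by
    have : Summable (fun k : ℕ => (c1 * ρ) * ρ ^ k) :=
      (summable_geometric_of_lt_one hρ0 hρ1).mul_left _
    apply this.congr; intro k; ring
  have hsum_q : Summable (fun k : ℕ => c2 * q ^ (k+1)) := by
    have : Summable (fun k : ℕ => (c2 * q) * q ^ k) :=
      (summable_geometric_of_lt_one hq0.le hq1).mul_left _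
    apply this.congr; intro k; ring
  have hsumG : Summable G := by
    apply Summable.add hsum_ρ hsum_q
  have hsum_tail : Summable (fun k : ℕ => f (k + (m+1))) :=
    Summable.of_nonneg_of_le (fun k => hf0 _) htail hsumG
  have hsumf : Summable f := (summable_nat_add_iff (m+1)).1 hsum_tail
  -- split the sum
  have hsplit : ∑' j, f j = (∑ i ∈ Finset.range (m+1), f i) + ∑' k, f (k + (m+1)) :=
    (Summable.sum_add_tsum_nat_add (m+1) hsumf).symm
  -- low-frequency part
  have hlow : (∑ i ∈ Finset.range (m+1), f i) ≤ K * ((m:ℝ)+1) ^ (p+1) := by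
    have h1 : (∑ i ∈ Finset.range (m+1), f i) ≤ ∑ i ∈ Finset.range (m+1), K * ((m:ℝ)+1) ^ p := by
      apply Finset.sum_le_sum
      intro i hi
      have him : i ≤ m := Nat.lt_succ_iff.1 (Finset.mem_range.1 hi)
      calc f i ≤ K * w i := mul_le_mul_of_nonneg_right (hlamK i) (hw0 i)
        _ ≤ K * ((m:ℝ)+1) ^ p := mul_le_mul_of_nonneg_left (hw_le_m i him) hK.le
    have h2 : (∑ i ∈ Finset.range (m+1), K * ((m:ℝ)+1) ^ p)
        = ((m:ℝ)+1) * (K * ((m:ℝ)+1) ^ p) := by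
      rw [Finset.sum_const, Finset.card_range]; push_cast; ring
    have h3 : ((m:ℝ)+1) * (K * ((m:ℝ)+1) ^ p) = K * ((m:ℝ)+1) ^ (p+1) := by
      rw [Real.rpow_add_one (by positivity : ((m:ℝ)+1) ≠ 0)]; ring
    linarith [h1, h2.le, h3.le]
  -- tail part
  have htsumG : ∑' k, G k = c1 * (ρ * (1-ρ)⁻¹) + c2 * (q * (1-q)⁻¹) := by
    rw [hG_def, Summable.tsum_add hsum_ρ hsum_q]
    congr 1
    · have : (fun k : ℕ => c1 * ρ ^ (k+1)) = fun k : ℕ => (c1 * ρ) * ρ ^ k := by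
        funext k; ring
      rw [this, tsum_mul_left, tsum_geometric_of_lt_one hρ0 hρ1]; ring
    · have : (fun k : ℕ => c2 * q ^ (k+1)) = fun k : ℕ => (c2 * q) * q ^ k := by
        funext k; ring
      rw [this, tsum_mul_left, tsum_geometric_of_lt_one hq0.le hq1]; ring
  have hq_le : q ≤ 1 / (1 + δ/2) := by
    have h1 : 1 + δ/2 ≤ Real.exp (δ/2) := by linarith [Real.add_one_le_exp (δ/2)]
    rw [hq_def, Real.exp_neg, one_div]
    exact inv_anti₀ (by positivity) h1
  have h1q : δ/4 ≤ 1 - q := by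
    have : 1 - 1/(1+δ/2) = (δ/2)/(1+δ/2) := by field_simp; ring
    have h2 : (δ/2)/(1+δ/2) ≥ δ/4 := by
      rw [ge_iff_le, div_le_div_iff₀ (by norm_num) (by positivity)]
      nlinarith
    linarith [hq_le]
  have hgeo_ρ : ρ * (1-ρ)⁻¹ ≤ δ⁻¹ := by
    have h : (1:ℝ) - ρ = δ := by rw [hρ_def]; ring
    rw [h]
    exact mul_le_of_le_one_left (inv_nonneg.2 hδ0.le) hρ1.le
  have hgeo_q : q * (1-q)⁻¹ ≤ 4 * δ⁻¹ := by
    have h1 : (1-q)⁻¹ ≤ (δ/4)⁻¹ := by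
      exact inv_anti₀ (by positivity) h1q
    have h2 : ((δ:ℝ)/4)⁻¹ = 4 * δ⁻¹ := by field_simp
    calc q * (1-q)⁻¹ ≤ 1 * (1-q)⁻¹ := by
          apply mul_le_mul_of_nonneg_right hq1.le (inv_nonneg.2 (by linarith))
      _ = (1-q)⁻¹ := by ring
      _ ≤ 4 * δ⁻¹ := by rw [← h2]; exact h1
  have htail_bound : (∑' k, f (k + (m+1)))
      ≤ c1 * δ⁻¹ + c2 * (4 * δ⁻¹) := by
    calc (∑' k, f (k + (m+1))) ≤ ∑' k, G k := Summable.tsum_le_tsum htail hsum_tail hsumG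
      _ = c1 * (ρ * (1-ρ)⁻¹) + c2 * (q * (1-q)⁻¹) := htsumG
      _ ≤ c1 * δ⁻¹ + c2 * (4 * δ⁻¹) := by
          apply add_le_add
          · exact mul_le_mul_of_nonneg_left hgeo_ρ hc10
          · exact mul_le_mul_of_nonneg_left hgeo_q hc20
  -- rewrite A * (4 δ⁻¹) in terms of δ^(-(p+1))
  have hA_eq : A = (2 * (p+1)) ^ p * (δ ^ p)⁻¹ := by
    rw [hA_def]
    have : (p+1) / (δ/2) = (2*(p+1)) / δ := by field_simp
    rw [this, Real.div_rpow (by positivity) hδ0.le, div_eq_mul_inv]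
  have hδ_neg : δ ^ (-(p+1)) = (δ ^ p)⁻¹ * δ⁻¹ := by
    rw [show -(p+1) = -p + (-1) by ring, Real.rpow_add hδ0, Real.rpow_neg hδ0.le,
      Real.rpow_neg_one]
  clear_value p ρ q w f A c1 c2 G
  -- assemble
  have hfinal : (∑' j, f j) ≤ K * ((m:ℝ)+1) ^ (p+1)
      + (K * 2 ^ p) * (δ⁻¹ * ((m:ℝ)+1) ^ p)
      + (4 * (2*(p+1)) ^ p * 2 ^ p) * (K * δ ^ (-(p+1))) := by
    rw [hsplit]
    have hc2' : c2 * (4 * δ⁻¹) = (4 * (2*(p+1)) ^ p * 2 ^ p) * (K * δ ^ (-(p+1))) := by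
      rw [hc2_def, hA_eq, hδ_neg]; ring
    have hc1' : c1 * δ⁻¹ = (K * 2 ^ p) * (δ⁻¹ * ((m:ℝ)+1) ^ p) := by
      rw [hc1_def]; ring
    have h := add_le_add hlow htail_bound
    rw [hc1', hc2'] at h
    exact le_of_le_of_eq h (by ring)
  -- final comparison with the target
  set T1 : ℝ := ((m:ℝ)+1) ^ (p+1) with hT1
  set T2 : ℝ := δ ^ (-(p+1)) with hT2
  set T3 : ℝ := δ⁻¹ * ((m:ℝ)+1) ^ p with hT3
  clear_value T1 T2 T3
  have hT1p : 0 ≤ T1 := by rw [hT1]; positivity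
  have hT2p : 0 ≤ T2 := by rw [hT2]; positivity
  have hT3p : 0 ≤ T3 := by rw [hT3]; positivity
  have h2p : (0:ℝ) ≤ 2 ^ p := Real.rpow_nonneg (by norm_num) p
  have h2p1 : (0:ℝ) ≤ (2*(p+1)) ^ p := Real.rpow_nonneg (by positivity) p
  calc (∑' j, f j) ≤ K * T1 + (K * 2 ^ p) * T3
        + (4 * (2*(p+1)) ^ p * 2 ^ p) * (K * T2) := hfinal
    _ ≤ (1 + 2 ^ p + 4 * (2*(p+1)) ^ p * 2 ^ p) * K * (T1 + T2 + T3) := by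
        nlinarith [mul_nonneg hK.le hT1p, mul_nonneg hK.le hT2p, mul_nonneg hK.le hT3p,
          mul_nonneg h2p (mul_nonneg hK.le hT1p), mul_nonneg h2p (mul_nonneg hK.le hT2p),
          mul_nonneg h2p1 (mul_nonneg h2p (mul_nonneg hK.le hT1p)),
          mul_nonneg h2p1 (mul_nonneg h2p (mul_nonneg hK.le hT3p)),
          mul_nonneg h2p1 (mul_nonneg h2p (mul_nonneg hK.le hT2p))]
end

section
/- Let h ∈ C²(ℝ) with |h'(z)| ≤ M₁ and |h''(z)| ≤ M₂ for all z ∈ ℝ. Then for all a, b, c, d ∈ ℝ: |h(a) − h(b) − h(c) + h(d)| ≤ M₁ |a − b − c + d| + M₂ (|a − c| + |b − d|) |c − d|. -/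
/-- Pointwise second-difference estimate for a `C²` function with bounded first and
second derivatives:
`|h(a) - h(b) - h(c) + h(d)| ≤ M₁|a-b-c+d| + M₂(|a-c|+|b-d|)|c-d|`. -/
theorem second_difference_estimate (h : ℝ → ℝ) (M₁ M₂ : ℝ) (hh : ContDiff ℝ 2 h)
    (h1 : ∀ z, |deriv h z| ≤ M₁) (h2 : ∀ z, |deriv (deriv h) z| ≤ M₂)
    (a b c d : ℝ) :
    |h a - h b - h c + h d| ≤ M₁ * |a - b - c + d| + M₂ * (|a - c| + |b - d|) * |c - d| := by
  have hh' : ContDiff ℝ 1 (deriv h) := by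
    have := (contDiff_succ_iff_deriv.mp (show ContDiff ℝ (1 + 1) h by exact_mod_cast hh))
    exact this.2.2
  have hdiff : Differentiable ℝ h := hh.differentiable (by norm_num)
  have hdiff' : Differentiable ℝ (deriv h) := hh'.differentiable one_ne_zero
  have hcont' : Continuous (deriv h) := hh'.continuous
  -- Lipschitz estimate for deriv h
  have hlip : ∀ x y : ℝ, |deriv h x - deriv h y| ≤ M₂ * |x - y| := by
    intro x y
    have := convex_univ.norm_image_sub_le_of_norm_deriv_le
      (f := deriv h) (C := M₂) (fun z _ => (hdiff' z)) (fun z _ => h2 z)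
      (Set.mem_univ y) (Set.mem_univ x)
    simpa [Real.norm_eq_abs] using this
  -- FTC along segments
  have key : ∀ x y : ℝ, h x - h y = ∫ t in (0:ℝ)..1, deriv h (y + t * (x - y)) * (x - y) := by
    intro x y
    have hderiv : ∀ t ∈ Set.uIcc (0:ℝ) 1,
        HasDerivAt (fun s => h (y + s * (x - y))) (deriv h (y + t * (x - y)) * (x - y)) t := by
      intro t _
      have h1 : HasDerivAt (fun s : ℝ => y + s * (x - y)) (x - y) t := by
        simpa using ((hasDerivAt_id t).mul_const (x - y)).const_add y
      exact ((hdiff (y + t * (x - y))).hasDerivAt).comp t h1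
    have hcont : IntervalIntegrable (fun t => deriv h (y + t * (x - y)) * (x - y))
        MeasureTheory.volume 0 1 := by
      exact ((hcont'.comp (by continuity)).mul continuous_const).intervalIntegrable 0 1
    have := intervalIntegral.integral_eq_sub_of_hasDerivAt hderiv hcont
    simpa using this.symm
  have heq : h a - h b - h c + h d
      = ∫ t in (0:ℝ)..1,
          (deriv h (b + t * (a - b)) * (a - b) - deriv h (d + t * (c - d)) * (c - d)) := by
    have i1 : IntervalIntegrable (fun t => deriv h (b + t * (a - b)) * (a - b))
        MeasureTheory.volume 0 1 :=
      ((hcont'.comp (by continuity)).mul continuous_const).intervalIntegrable 0 1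
    have i2 : IntervalIntegrable (fun t => deriv h (d + t * (c - d)) * (c - d))
        MeasureTheory.volume 0 1 :=
      ((hcont'.comp (by continuity)).mul continuous_const).intervalIntegrable 0 1
    rw [intervalIntegral.integral_sub i1 i2, ← key a b, ← key c d]
    ring
  rw [heq]
  have hbound : ∀ t ∈ Set.Ioc (0:ℝ) 1,
      ‖deriv h (b + t * (a - b)) * (a - b) - deriv h (d + t * (c - d)) * (c - d)‖
        ≤ M₁ * |a - b - c + d| + M₂ * (|a - c| + |b - d|) * |c - d| := by
    intro t ht
    obtain ⟨ht0, ht1⟩ := ht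
    set β := b + t * (a - b)
    set δ := d + t * (c - d)
    have hsplit : deriv h β * (a - b) - deriv h δ * (c - d)
        = deriv h β * ((a - b) - (c - d)) + (deriv h β - deriv h δ) * (c - d) := by ring
    rw [Real.norm_eq_abs, hsplit]
    have t1 : |deriv h β * ((a - b) - (c - d))| ≤ M₁ * |a - b - c + d| := by
      rw [abs_mul]
      have : |(a - b) - (c - d)| = |a - b - c + d| := by ring_nf
      rw [this]
      exact mul_le_mul_of_nonneg_right (h1 β) (abs_nonneg _)
    have t2 : |(deriv h β - deriv h δ) * (c - d)| ≤ M₂ * (|a - c| + |b - d|) * |c - d| := by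
      rw [abs_mul]
      refine mul_le_mul_of_nonneg_right ?_ (abs_nonneg _)
      refine (hlip β δ).trans ?_
      refine mul_le_mul_of_nonneg_left ?_ ((abs_nonneg _).trans (h2 0))
      have hβδ : β - δ = (1 - t) * (b - d) + t * (a - c) := by simp only [β, δ]; ring
      rw [hβδ]
      calc |(1 - t) * (b - d) + t * (a - c)|
          ≤ |(1 - t) * (b - d)| + |t * (a - c)| := abs_add_le _ _
        _ = (1 - t) * |b - d| + t * |a - c| := by
            rw [abs_mul, abs_mul, abs_of_nonneg (by linarith : (0:ℝ) ≤ 1 - t),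
              abs_of_nonneg ht0.le]
        _ ≤ |a - c| + |b - d| := by
            nlinarith [abs_nonneg (b - d), abs_nonneg (a - c)]
    calc |deriv h β * ((a - b) - (c - d)) + (deriv h β - deriv h δ) * (c - d)|
        ≤ |deriv h β * ((a - b) - (c - d))| + |(deriv h β - deriv h δ) * (c - d)| := abs_add_le _ _
      _ ≤ M₁ * |a - b - c + d| + M₂ * (|a - c| + |b - d|) * |c - d| := add_le_add t1 t2
  have hC := intervalIntegral.norm_integral_le_of_norm_le_const (a := (0:ℝ)) (b := 1)
    (f := fun t => deriv h (b + t * (a - b)) * (a - b) - deriv h (d + t * (c - d)) * (c - d))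
    (C := M₁ * |a - b - c + d| + M₂ * (|a - c| + |b - d|) * |c - d|)
    (fun t ht => hbound t (by simpa [Set.uIoc_of_le (zero_le_one : (0:ℝ) ≤ 1)] using ht))
  simpa [Real.norm_eq_abs] using hC
end

section
/- Let s ∈ (0,1) and for measurable u : [0,2π) → ℝ define the Gagliardo seminorm [u]²_s := ∫₀^{2π}∫₀^{2π} |u(x) − u(y)|² / |x − y|^{1+2s} dx dy. Let h ∈ C²(ℝ) with |h'| ≤ M and |h''| ≤ M everywhere, and let u₁, u₂ : [0,2π) → ℝ be bounded measurable functions with [u₁]_s ≤ k and [u₂]_s ≤ k. Then [h∘u₁ − h∘u₂]²_s ≤ 2M² [u₁ − u₂]²_s + 8M² k² ‖u₁ − u₂‖²_∞, where ‖·‖_∞ denotes the supremum norm. -/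
open MeasureTheory
open scoped ENNReal

/-- The squared Gagliardo seminorm `[u]²_s` on `[0, 2π)`. -/
noncomputable def gagliardoSq (s : ℝ) (u : ℝ → ℝ) : ℝ≥0∞ :=
  ∫⁻ x in Set.Ico (0:ℝ) (2 * Real.pi), ∫⁻ y in Set.Ico (0:ℝ) (2 * Real.pi),
    ENNReal.ofReal (|u x - u y| ^ 2 / |x - y| ^ (1 + 2 * s))

theorem key_second_diff (h : ℝ → ℝ) (M : ℝ) (hh : ContDiff ℝ 2 h)
    (h1 : ∀ z, |deriv h z| ≤ M) (h2 : ∀ z, |deriv (deriv h) z| ≤ M)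
    (a b c d : ℝ) :
    |h a - h b - (h c - h d)| ≤ M * |a - b - (c - d)| + M * (|a - c| + |b - d|) * |c - d| := by
  have hM : 0 ≤ M := le_trans (abs_nonneg _) (h1 0)
  have hdh : Differentiable ℝ h := hh.differentiable (by norm_num)
  have hdh' : Differentiable ℝ (deriv h) := (hh.iterate_deriv' 1 1).differentiable (by norm_num)
  have hlip : ∀ p q : ℝ, |deriv h p - deriv h q| ≤ M * |p - q| := by
    intro p q
    have := Convex.norm_image_sub_le_of_norm_deriv_le (f := deriv h) (s := Set.univ)
      (fun x _ => hdh' x)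
      (fun x _ => by
        simpa [derivWithin_univ, Real.norm_eq_abs] using h2 x)
      convex_univ (Set.mem_univ q) (Set.mem_univ p)
    simpa [Real.norm_eq_abs] using this
  set g : ℝ → ℝ := fun t => h (b + t * (a - b)) - h (d + t * (c - d)) with hg
  have hgd : ∀ t : ℝ, HasDerivAt g
      (deriv h (b + t * (a - b)) * (a - b) - deriv h (d + t * (c - d)) * (c - d)) t := by
    intro t
    have H1 : HasDerivAt (fun t : ℝ => b + t * (a - b)) (a - b) t := by
      simpa using ((hasDerivAt_id t).mul_const (a - b)).const_add b
    have H2 : HasDerivAt (fun t : ℝ => d + t * (c - d)) (c - d) t := by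
      simpa using ((hasDerivAt_id t).mul_const (c - d)).const_add d
    exact (((hdh _).hasDerivAt.comp t H1)).sub (((hdh _).hasDerivAt.comp t H2))
  have key := Convex.norm_image_sub_le_of_norm_hasDerivWithin_le (f := g)
    (f' := fun t => deriv h (b + t * (a - b)) * (a - b) - deriv h (d + t * (c - d)) * (c - d))
    (C := M * |a - b - (c - d)| + M * (|a - c| + |b - d|) * |c - d|)
    (s := Set.Icc (0:ℝ) 1)
    (fun t _ => (hgd t).hasDerivWithinAt)
    (fun t ht => by
      obtain ⟨ht0, ht1⟩ := ht
      show ‖deriv h (b + t * (a - b)) * (a - b) - deriv h (d + t * (c - d)) * (c - d)‖ ≤ _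
      have expand : deriv h (b + t * (a - b)) * (a - b) - deriv h (d + t * (c - d)) * (c - d)
          = deriv h (b + t * (a - b)) * (a - b - (c - d))
            + (deriv h (b + t * (a - b)) - deriv h (d + t * (c - d))) * (c - d) := by ring
      rw [Real.norm_eq_abs, expand]
      refine le_trans (abs_add_le _ _) (add_le_add ?_ ?_)
      · rw [abs_mul]
        exact mul_le_mul_of_nonneg_right (h1 _) (abs_nonneg _)
      · rw [abs_mul]
        refine mul_le_mul_of_nonneg_right ?_ (abs_nonneg _)
        refine le_trans (hlip _ _) (mul_le_mul_of_nonneg_left ?_ hM)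
        have e : b + t * (a - b) - (d + t * (c - d)) = t * (a - c) + (1 - t) * (b - d) := by ring
        rw [e]
        refine le_trans (abs_add_le _ _) ?_
        rw [abs_mul, abs_mul]
        have h1' : |t| * |a - c| ≤ 1 * |a - c| :=
          mul_le_mul_of_nonneg_right (by rw [abs_of_nonneg ht0]; exact ht1) (abs_nonneg _)
        have h2' : |1 - t| * |b - d| ≤ 1 * |b - d| :=
          mul_le_mul_of_nonneg_right (by rw [abs_of_nonneg (by linarith)]; linarith) (abs_nonneg _)
        calc |t| * |a - c| + |1 - t| * |b - d| ≤ 1 * |a - c| + 1 * |b - d| := add_le_add h1' h2'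
          _ = |a - c| + |b - d| := by ring)
    (convex_Icc 0 1) (Set.left_mem_Icc.mpr zero_le_one) (Set.right_mem_Icc.mpr zero_le_one)
  rw [show h a - h b - (h c - h d) = h a - h c - (h b - h d) by ring]
  simpa [hg, Real.norm_eq_abs] using key

set_option maxHeartbeats 8000000 in
/-- Local Lipschitz estimate in the Gagliardo seminorm for the composition operator
`u ↦ h ∘ u`: `[h∘u₁ - h∘u₂]²_s ≤ 2M²[u₁-u₂]²_s + 8M²k²‖u₁-u₂‖²_∞`. -/
theorem composition_gagliardo_lipschitz (s : ℝ) (hs : s ∈ Set.Ioo (0:ℝ) 1)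
    (h : ℝ → ℝ) (M : ℝ) (hh : ContDiff ℝ 2 h)
    (h1 : ∀ z, |deriv h z| ≤ M) (h2 : ∀ z, |deriv (deriv h) z| ≤ M)
    (u₁ u₂ : ℝ → ℝ) (hm1 : Measurable u₁) (hm2 : Measurable u₂)
    (B : ℝ) (hb1 : ∀ x, |u₁ x| ≤ B) (hb2 : ∀ x, |u₂ x| ≤ B)
    (k : ℝ) (hk : 0 ≤ k)
    (hk1 : gagliardoSq s u₁ ≤ ENNReal.ofReal (k ^ 2))
    (hk2 : gagliardoSq s u₂ ≤ ENNReal.ofReal (k ^ 2)) :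
    gagliardoSq s (fun x => h (u₁ x) - h (u₂ x))
      ≤ ENNReal.ofReal (2 * M ^ 2) * gagliardoSq s (fun x => u₁ x - u₂ x)
        + ENNReal.ofReal (8 * M ^ 2 * k ^ 2)
            * ENNReal.ofReal ((⨆ x : Set.Ico (0:ℝ) (2 * Real.pi), |u₁ x.1 - u₂ x.1|) ^ 2) := by
  have hM : 0 ≤ M := le_trans (abs_nonneg _) (h1 0)
  set p : ℝ := 1 + 2 * s with hp
  set I : Set ℝ := Set.Ico (0:ℝ) (2 * Real.pi) with hI
  set S : ℝ := ⨆ x : I, |u₁ x.1 - u₂ x.1| with hS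
  have h0I : (0:ℝ) ∈ I := ⟨le_refl 0, Real.two_pi_pos⟩
  have hbdd : BddAbove (Set.range fun x : I => |u₁ x.1 - u₂ x.1|) := by
    refine ⟨B + B, ?_⟩
    rintro _ ⟨x, rfl⟩
    exact le_trans (abs_sub _ _) (add_le_add (hb1 _) (hb2 _))
  have hSb : ∀ y ∈ I, |u₁ y - u₂ y| ≤ S := fun y hy =>
    le_ciSup hbdd (⟨y, hy⟩ : I)
  have hS0 : 0 ≤ S := le_trans (abs_nonneg _) (hSb 0 h0I)
  -- measurability of the three integrands, uncurried
  have meas : ∀ w : ℝ → ℝ, Measurable w →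
      Measurable (fun q : ℝ × ℝ => ENNReal.ofReal (|w q.1 - w q.2| ^ 2 / |q.1 - q.2| ^ p)) := by
    intro w hw
    apply ENNReal.measurable_ofReal.comp
    apply Measurable.div
    · exact ((hw.comp measurable_fst).sub (hw.comp measurable_snd)).abs.pow_const 2
    · have : Measurable (fun x : ℝ => x ^ p) := by measurability
      exact this.comp (measurable_fst.sub measurable_snd).abs
  have mv : Measurable (fun x : ℝ => u₁ x - u₂ x) := hm1.sub hm2
  have hch : Measurable h := hh.continuous.measurable
  have mF : Measurable (fun x : ℝ => h (u₁ x) - h (u₂ x)) :=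
    (hch.comp hm1).sub (hch.comp hm2)
  -- pointwise estimate
  have ptwise : ∀ x : ℝ, ∀ y ∈ I,
      ENNReal.ofReal (|(h (u₁ x) - h (u₂ x)) - (h (u₁ y) - h (u₂ y))| ^ 2 / |x - y| ^ p)
        ≤ ENNReal.ofReal (2 * M ^ 2)
            * ENNReal.ofReal (|(u₁ x - u₂ x) - (u₁ y - u₂ y)| ^ 2 / |x - y| ^ p)
          + ENNReal.ofReal (4 * M ^ 2 * S ^ 2)
            * (ENNReal.ofReal (|u₁ x - u₁ y| ^ 2 / |x - y| ^ p)
              + ENNReal.ofReal (|u₂ x - u₂ y| ^ 2 / |x - y| ^ p)) := by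
    intro x y hy
    set r : ℝ := |x - y| ^ p with hr
    have hr0 : 0 ≤ r := Real.rpow_nonneg (abs_nonneg _) p
    set A : ℝ := |(h (u₁ x) - h (u₂ x)) - (h (u₁ y) - h (u₂ y))| with hA
    set W : ℝ := |(u₁ x - u₂ x) - (u₁ y - u₂ y)| with hW
    set P : ℝ := |u₁ x - u₁ y| with hPdef
    set Q : ℝ := |u₂ x - u₂ y| with hQdef
    have hkey : A ≤ M * W + M * (P + Q) * S := by
      have := key_second_diff h M hh h1 h2 (u₁ x) (u₂ x) (u₁ y) (u₂ y)
      have e1 : u₁ x - u₂ x - (u₁ y - u₂ y) = (u₁ x - u₂ x) - (u₁ y - u₂ y) := by ring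
      have hstep : M * (P + Q) * |u₁ y - u₂ y| ≤ M * (P + Q) * S :=
        mul_le_mul_of_nonneg_left (hSb y hy)
          (mul_nonneg hM (add_nonneg (abs_nonneg _) (abs_nonneg _)))
      calc A = |h (u₁ x) - h (u₂ x) - (h (u₁ y) - h (u₂ y))| := rfl
        _ ≤ M * |u₁ x - u₂ x - (u₁ y - u₂ y)|
            + M * (|u₁ x - u₁ y| + |u₂ x - u₂ y|) * |u₁ y - u₂ y| := this
        _ = M * W + M * (P + Q) * |u₁ y - u₂ y| := by rw [hW, hPdef, hQdef, e1]
        _ ≤ M * W + M * (P + Q) * S := by linarith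
    have hsq : A ^ 2 ≤ 2 * M ^ 2 * W ^ 2 + 4 * M ^ 2 * S ^ 2 * (P ^ 2 + Q ^ 2) := by
      have hA0 : 0 ≤ A := abs_nonneg _
      have h₁ : A ^ 2 ≤ (M * W + M * (P + Q) * S) ^ 2 := by
        apply pow_le_pow_left₀ hA0 hkey
      have h₂ : (M * W + M * (P + Q) * S) ^ 2
          ≤ 2 * (M * W) ^ 2 + 2 * (M * (P + Q) * S) ^ 2 := by
        nlinarith [sq_nonneg (M * W - M * (P + Q) * S)]
      have h₃ : 4 * M ^ 2 * S ^ 2 * (P ^ 2 + Q ^ 2) - 2 * (M * (P + Q) * S) ^ 2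
          = 2 * (M * S * (P - Q)) ^ 2 := by ring
      have h₄ : 0 ≤ 2 * (M * S * (P - Q)) ^ 2 := by positivity
      have h₅ : 2 * (M * W) ^ 2 = 2 * M ^ 2 * W ^ 2 := by ring
      linarith
    have hdiv : A ^ 2 / r ≤ 2 * M ^ 2 * (W ^ 2 / r)
        + 4 * M ^ 2 * S ^ 2 * (P ^ 2 / r + Q ^ 2 / r) := by
      rcases eq_or_lt_of_le hr0 with h0 | h0
      · rw [← h0]
        simp
      · have hd : A ^ 2 / r ≤ (2 * M ^ 2 * W ^ 2 + 4 * M ^ 2 * S ^ 2 * (P ^ 2 + Q ^ 2)) / r := by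
          gcongr
        calc A ^ 2 / r ≤ (2 * M ^ 2 * W ^ 2 + 4 * M ^ 2 * S ^ 2 * (P ^ 2 + Q ^ 2)) / r := hd
          _ = 2 * M ^ 2 * (W ^ 2 / r) + 4 * M ^ 2 * S ^ 2 * (P ^ 2 / r + Q ^ 2 / r) := by
            rw [add_div, mul_div_assoc, mul_div_assoc, add_div]
    calc ENNReal.ofReal (A ^ 2 / r)
        ≤ ENNReal.ofReal (2 * M ^ 2 * (W ^ 2 / r)
            + 4 * M ^ 2 * S ^ 2 * (P ^ 2 / r + Q ^ 2 / r)) := ENNReal.ofReal_le_ofReal hdiv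
      _ = ENNReal.ofReal (2 * M ^ 2) * ENNReal.ofReal (W ^ 2 / r)
          + ENNReal.ofReal (4 * M ^ 2 * S ^ 2)
            * (ENNReal.ofReal (P ^ 2 / r) + ENNReal.ofReal (Q ^ 2 / r)) := by
          rw [ENNReal.ofReal_add (by positivity) (by positivity),
            ENNReal.ofReal_mul (p := 2 * M ^ 2) (by positivity),
            ENNReal.ofReal_mul (p := 4 * M ^ 2 * S ^ 2) (by positivity),
            ENNReal.ofReal_add (by positivity) (by positivity)]
  -- names for inner integrals
  set c1 : ℝ≥0∞ := ENNReal.ofReal (2 * M ^ 2) with hc1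
  set c2 : ℝ≥0∞ := ENNReal.ofReal (4 * M ^ 2 * S ^ 2) with hc2
  have measF := meas _ mF
  have measv := meas _ mv
  have meas1 := meas _ hm1
  have meas2 := meas _ hm2
  have minn : ∀ (w : ℝ → ℝ), Measurable w → ∀ x : ℝ,
      Measurable (fun y => ENNReal.ofReal (|w x - w y| ^ 2 / |x - y| ^ p)) := by
    intro w hw x
    exact (meas w hw).comp measurable_prodMk_left
  have mout : ∀ (w : ℝ → ℝ), Measurable w →
      Measurable (fun x => ∫⁻ y in I, ENNReal.ofReal (|w x - w y| ^ 2 / |x - y| ^ p)) := by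
    intro w hw
    exact Measurable.lintegral_prod_right (meas w hw)
  -- inner step
  have inner : ∀ x : ℝ,
      (∫⁻ y in I, ENNReal.ofReal (|(h (u₁ x) - h (u₂ x)) - (h (u₁ y) - h (u₂ y))| ^ 2 / |x - y| ^ p))
        ≤ c1 * (∫⁻ y in I, ENNReal.ofReal (|(u₁ x - u₂ x) - (u₁ y - u₂ y)| ^ 2 / |x - y| ^ p))
          + c2 * ((∫⁻ y in I, ENNReal.ofReal (|u₁ x - u₁ y| ^ 2 / |x - y| ^ p))
            + (∫⁻ y in I, ENNReal.ofReal (|u₂ x - u₂ y| ^ 2 / |x - y| ^ p))) := by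
    intro x
    have step1 := setLIntegral_mono (s := I) (μ := volume)
      (g := fun y => c1 * ENNReal.ofReal (|(u₁ x - u₂ x) - (u₁ y - u₂ y)| ^ 2 / |x - y| ^ p)
        + c2 * (ENNReal.ofReal (|u₁ x - u₁ y| ^ 2 / |x - y| ^ p)
          + ENNReal.ofReal (|u₂ x - u₂ y| ^ 2 / |x - y| ^ p)))
      ((measurable_const.mul (minn _ mv x)).add
        (measurable_const.mul ((minn _ hm1 x).add (minn _ hm2 x))))
      (ptwise x)
    refine le_trans step1 (le_of_eq ?_)
    rw [lintegral_add_left ((minn _ mv x).const_mul _),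
      lintegral_const_mul _ (minn _ mv x),
      lintegral_const_mul _ ((minn _ hm1 x).fun_add (minn _ hm2 x)),
      lintegral_add_left (minn _ hm1 x)]
  -- outer step
  have outer : gagliardoSq s (fun x => h (u₁ x) - h (u₂ x))
      ≤ c1 * gagliardoSq s (fun x => u₁ x - u₂ x) + c2 * (gagliardoSq s u₁ + gagliardoSq s u₂) := by
    have step1 := setLIntegral_mono (s := I) (μ := volume)
      (g := fun x => c1 * (∫⁻ y in I, ENNReal.ofReal (|(u₁ x - u₂ x) - (u₁ y - u₂ y)| ^ 2 / |x - y| ^ p))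
        + c2 * ((∫⁻ y in I, ENNReal.ofReal (|u₁ x - u₁ y| ^ 2 / |x - y| ^ p))
          + (∫⁻ y in I, ENNReal.ofReal (|u₂ x - u₂ y| ^ 2 / |x - y| ^ p))))
      ((measurable_const.mul (mout _ mv)).add
        (measurable_const.mul ((mout _ hm1).add (mout _ hm2))))
      (fun x _ => inner x)
    refine le_trans (le_of_eq rfl) (le_trans step1 (le_of_eq ?_))
    rw [lintegral_add_left ((mout _ mv).const_mul _),
      lintegral_const_mul _ (mout _ mv),
      lintegral_const_mul _ ((mout _ hm1).fun_add (mout _ hm2)),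
      lintegral_add_left (mout _ hm1)]
    rfl
  refine le_trans outer ?_
  have hfin : c2 * (gagliardoSq s u₁ + gagliardoSq s u₂)
      ≤ ENNReal.ofReal (8 * M ^ 2 * k ^ 2) * ENNReal.ofReal (S ^ 2) := by
    calc c2 * (gagliardoSq s u₁ + gagliardoSq s u₂)
        ≤ c2 * (ENNReal.ofReal (k ^ 2) + ENNReal.ofReal (k ^ 2)) := by
          gcongr
      _ = ENNReal.ofReal (8 * M ^ 2 * k ^ 2) * ENNReal.ofReal (S ^ 2) := by
          rw [hc2, ← ENNReal.ofReal_add (by positivity) (by positivity),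
            ← ENNReal.ofReal_mul (by positivity), ← ENNReal.ofReal_mul (by positivity)]
          congr 1
          ring
  exact add_le_add le_rfl hfin
end

section
/- Let λ > 0, γ > 0 and s ∈ ℝ, and let (g_k)_{k∈ℤ} be complex numbers with Σ_{k∈ℤ} |g_k|² (1+k²)^s < ∞. Define ρ_k := −g_k / ( k²/(λ+γ) + λ ) for k ∈ ℤ. Then Σ_{k∈ℤ} |ρ_k|² (1+k²)^{s+2} ≤ ( 2(λ+γ) + 1/λ )² · Σ_{k∈ℤ} |g_k|² (1+k²)^s. -/
/-- Elliptic regularity step in the Hille–Yosida verification for the damped-wave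
operator: in Fourier coordinates, the solution `ρ_k = -g_k/(k²/(λ+γ)+λ)` of the
resolvent equation gains two derivatives, with
`Σ_k |ρ_k|²(1+k²)^{s+2} ≤ (2(λ+γ)+1/λ)² Σ_k |g_k|²(1+k²)^s`. -/
theorem resolvent_fourier_regularity (lam γ s : ℝ) (hlam : 0 < lam) (hγ : 0 < γ)
    (g : ℤ → ℂ) (hg : Summable fun k : ℤ => ‖g k‖ ^ 2 * (1 + (k : ℝ) ^ 2) ^ s) :
    (∑' k : ℤ, ‖-g k / (((k : ℝ) ^ 2 / (lam + γ) + lam : ℝ) : ℂ)‖ ^ 2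
        * (1 + (k : ℝ) ^ 2) ^ (s + 2))
      ≤ (2 * (lam + γ) + 1 / lam) ^ 2
          * ∑' k : ℤ, ‖g k‖ ^ 2 * (1 + (k : ℝ) ^ 2) ^ s := by
  set C : ℝ := 2 * (lam + γ) + 1 / lam with hC
  have hlg : (0:ℝ) < lam + γ := by linarith
  have hCpos : 0 < C := by positivity
  have key : ∀ k : ℤ, ‖-g k / (((k : ℝ) ^ 2 / (lam + γ) + lam : ℝ) : ℂ)‖ ^ 2
      * (1 + (k : ℝ) ^ 2) ^ (s + 2)
      ≤ C ^ 2 * (‖g k‖ ^ 2 * (1 + (k : ℝ) ^ 2) ^ s) := by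
    intro k
    set d : ℝ := (k : ℝ) ^ 2 / (lam + γ) + lam with hd
    have hdpos : 0 < d := by positivity
    have hb : (0:ℝ) < 1 + (k : ℝ) ^ 2 := by positivity
    have hnorm : ‖-g k / ((d : ℝ) : ℂ)‖ = ‖g k‖ / d := by
      rw [norm_div, norm_neg, Complex.norm_real, Real.norm_eq_abs, abs_of_pos hdpos]
    have h1 : 1 + (k : ℝ) ^ 2 ≤ C * d := by
      have e1 : C * d = 2 * (k : ℝ) ^ 2 + 2 * (lam + γ) * lam
          + (k : ℝ) ^ 2 / (lam * (lam + γ)) + 1 := by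
        rw [hC, hd]; field_simp; ring
      have h2 : 0 ≤ (k : ℝ) ^ 2 / (lam * (lam + γ)) :=
        div_nonneg (sq_nonneg _) (le_of_lt (mul_pos hlam hlg))
      rw [show C * d = _ from e1]
      nlinarith [sq_nonneg (k : ℝ), mul_pos hlg hlam]
    have hsq : (1 + (k : ℝ) ^ 2) ^ 2 ≤ (C * d) ^ 2 :=
      pow_le_pow_left₀ (le_of_lt hb) h1 2
    have hsplit : (1 + (k : ℝ) ^ 2) ^ (s + 2)
        = (1 + (k : ℝ) ^ 2) ^ s * (1 + (k : ℝ) ^ 2) ^ 2 := by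
      rw [Real.rpow_add hb, Real.rpow_two]
    rw [hnorm, hsplit, div_pow]
    have hps : 0 ≤ (1 + (k : ℝ) ^ 2) ^ s := le_of_lt (Real.rpow_pos_of_pos hb s)
    rw [div_mul_eq_mul_div, div_le_iff₀ (by positivity)]
    calc ‖g k‖ ^ 2 * ((1 + (k : ℝ) ^ 2) ^ s * (1 + (k : ℝ) ^ 2) ^ 2)
        = ‖g k‖ ^ 2 * (1 + (k : ℝ) ^ 2) ^ s * (1 + (k : ℝ) ^ 2) ^ 2 := by ring
      _ ≤ ‖g k‖ ^ 2 * (1 + (k : ℝ) ^ 2) ^ s * (C * d) ^ 2 := by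
          apply mul_le_mul_of_nonneg_left hsq (by positivity)
      _ = C ^ 2 * (‖g k‖ ^ 2 * (1 + (k : ℝ) ^ 2) ^ s) * d ^ 2 := by ring
  have hsum2 : Summable fun k : ℤ => C ^ 2 * (‖g k‖ ^ 2 * (1 + (k : ℝ) ^ 2) ^ s) :=
    hg.mul_left _
  have hsum1 : Summable fun k : ℤ => ‖-g k / (((k : ℝ) ^ 2 / (lam + γ) + lam : ℝ) : ℂ)‖ ^ 2
      * (1 + (k : ℝ) ^ 2) ^ (s + 2) := by
    apply Summable.of_nonneg_of_le (fun k => by positivity) key hsum2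
  calc (∑' k : ℤ, ‖-g k / (((k : ℝ) ^ 2 / (lam + γ) + lam : ℝ) : ℂ)‖ ^ 2
        * (1 + (k : ℝ) ^ 2) ^ (s + 2))
      ≤ ∑' k : ℤ, C ^ 2 * (‖g k‖ ^ 2 * (1 + (k : ℝ) ^ 2) ^ s) :=
        Summable.tsum_le_tsum key hsum1 hsum2
    _ = C ^ 2 * ∑' k : ℤ, ‖g k‖ ^ 2 * (1 + (k : ℝ) ^ 2) ^ s := tsum_mul_left
end
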